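/- Let A, B be finite subsets of ℤ_M with A ⊕ B = ℤ_M (i.e., every element of ℤ_M is uniquely a sum a + b with a ∈ A, b ∈ B). Then |A| · |B| = M and Div(A) ∩ Div(B) = {M}, where Div(E) = {gcd(a - a', M) : a, a' ∈ E}. Conversely, if |A| · |B| = M and Div(A) ∩ Div(B) = {M}, then A ⊕ B = ℤ_M. -/

import Mathlib

open Finset

/-- `A ⊕ B = ℤ_M`: every element of `ℤ_M` has a unique representation `a + b`
with `a ∈ A`, `b ∈ B`. -/
def Tiles {M : ℕ} (A B : Finset (ZMod M)) : Prop :=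
  ∀ g : ZMod M, ∃! ab : ZMod M × ZMod M, ab.1 ∈ A ∧ ab.2 ∈ B ∧ ab.1 + ab.2 = g

/-- The division set `Div(E) = {gcd(a - a', M) : a, a' ∈ E}`. -/
def DivSet {M : ℕ} (E : Finset (ZMod M)) : Set ℕ :=
  {d | ∃ a ∈ E, ∃ b ∈ E, Nat.gcd ((a - b).val) M = d}

namespace SandsAux

variable {M : ℕ}

/-- number of representations of `g` as `c*a + b` with `a ∈ A`, `b ∈ B`. -/
def cnt (A B : Finset (ZMod M)) (c g : ZMod M) : ℕ :=
  ((A ×ˢ B).filter (fun ab => c * ab.1 + ab.2 = g)).card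

lemma cnt_eq_one_iff (A B : Finset (ZMod M)) (c g : ZMod M) :
    cnt A B c g = 1 ↔
      ∃! ab : ZMod M × ZMod M, ab.1 ∈ A ∧ ab.2 ∈ B ∧ c * ab.1 + ab.2 = g := by
  unfold cnt
  rw [Finset.card_eq_one]
  constructor
  · rintro ⟨ab, hab⟩
    have hmem : ab ∈ (A ×ˢ B).filter (fun ab => c * ab.1 + ab.2 = g) := by
      rw [hab]; exact Finset.mem_singleton_self ab
    rw [Finset.mem_filter, Finset.mem_product] at hmem
    refine ⟨ab, ⟨hmem.1.1, hmem.1.2, hmem.2⟩, ?_⟩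
    intro y hy
    have : y ∈ (A ×ˢ B).filter (fun ab => c * ab.1 + ab.2 = g) := by
      rw [Finset.mem_filter, Finset.mem_product]
      exact ⟨⟨hy.1, hy.2.1⟩, hy.2.2⟩
    rw [hab] at this
    exact Finset.mem_singleton.mp this
  · rintro ⟨ab, hab, hu⟩
    refine ⟨ab, ?_⟩
    ext y
    rw [Finset.mem_filter, Finset.mem_product, Finset.mem_singleton]
    constructor
    · rintro ⟨⟨h1, h2⟩, h3⟩; exact hu y ⟨h1, h2, h3⟩
    · rintro rfl; exact ⟨⟨hab.1, hab.2.1⟩, hab.2.2⟩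

lemma tiles_iff (A B : Finset (ZMod M)) :
    Tiles A B ↔ ∀ g, cnt A B 1 g = 1 := by
  unfold Tiles
  constructor
  · intro h g
    rw [cnt_eq_one_iff]
    simpa only [one_mul] using h g
  · intro h g
    have := (cnt_eq_one_iff A B 1 g).mp (h g)
    simpa only [one_mul] using this

variable [NeZero M]

lemma sum_cnt (A B : Finset (ZMod M)) (c : ZMod M) :
    ∑ g : ZMod M, cnt A B c g = A.card * B.card := by
  rw [← Finset.card_product]
  exact (Finset.card_eq_sum_card_fiberwise (fun ab _ => Finset.mem_univ _)).symm

lemma card_univ_zmod : (Finset.univ : Finset (ZMod M)).card = M := by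
  rw [Finset.card_univ, ZMod.card]

lemma cnt_all_one (A B : Finset (ZMod M)) (c : ZMod M)
    (hcard : A.card * B.card = M) (h : ∀ g, 1 ≤ cnt A B c g) :
    ∀ g, cnt A B c g = 1 := by
  by_contra hc
  push_neg at hc
  obtain ⟨g0, hg0⟩ := hc
  have hlt : ∑ _g : ZMod M, 1 < ∑ g : ZMod M, cnt A B c g :=
    Finset.sum_lt_sum (fun g _ => h g)
      ⟨g0, Finset.mem_univ _, lt_of_le_of_ne (h g0) (Ne.symm hg0)⟩
  rw [sum_cnt, hcard, Finset.sum_const, smul_eq_mul, mul_one, card_univ_zmod] at hlt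
  exact lt_irrefl M hlt

lemma cnt_all_one' (A B : Finset (ZMod M)) (c : ZMod M)
    (hcard : A.card * B.card = M) (h : ∀ g, cnt A B c g ≤ 1) :
    ∀ g, cnt A B c g = 1 := by
  by_contra hc
  push_neg at hc
  obtain ⟨g0, hg0⟩ := hc
  have hlt : ∑ g : ZMod M, cnt A B c g < ∑ _g : ZMod M, 1 :=
    Finset.sum_lt_sum (fun g _ => h g)
      ⟨g0, Finset.mem_univ _, lt_of_le_of_ne (h g0) hg0⟩
  rw [sum_cnt, hcard, Finset.sum_const, smul_eq_mul, mul_one, card_univ_zmod] at hlt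
  exact lt_irrefl M hlt

section Frobenius

variable (p : ℕ) [Fact p.Prime]

instance : CharP (AddMonoidAlgebra (ZMod p) (ZMod M)) p := by
  apply charP_of_injective_ringHom
    (f := AddMonoidAlgebra.singleZeroRingHom (R := ZMod p) (M := ZMod M))
  intro a b h
  simpa [AddMonoidAlgebra.singleZeroRingHom] using h

/-- `∑_{a ∈ A} X^{c·a}` in the group algebra. -/
noncomputable def SA (A : Finset (ZMod M)) (c : ZMod M) :
    AddMonoidAlgebra (ZMod p) (ZMod M) :=
  ∑ a ∈ A, AddMonoidAlgebra.single (c * a) 1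

/-- `∑_{b ∈ B} X^{b}` in the group algebra. -/
noncomputable def SB (B : Finset (ZMod M)) :
    AddMonoidAlgebra (ZMod p) (ZMod M) :=
  ∑ b ∈ B, AddMonoidAlgebra.single b 1

/-- `∑_{g} X^{g}` in the group algebra. -/
noncomputable def Delta : AddMonoidAlgebra (ZMod p) (ZMod M) :=
  ∑ g : ZMod M, AddMonoidAlgebra.single g 1

lemma SA_mul_SB_apply (A B : Finset (ZMod M)) (c g : ZMod M) :
    (SA p A c * SB p B).coeff g = (cnt A B c g : ZMod p) := by
  unfold SA SB cnt
  rw [Finset.sum_mul_sum]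
  simp only [AddMonoidAlgebra.single_mul_single, mul_one]
  rw [← Finset.sum_product', AddMonoidAlgebra.coeff_sum, Finset.sum_apply']
  simp only [AddMonoidAlgebra.coeff_single]
  simp only [Finsupp.single_apply]
  rw [sum_boole]

lemma Delta_apply (g : ZMod M) : (Delta p (M := M)).coeff g = 1 := by
  unfold Delta
  rw [AddMonoidAlgebra.coeff_sum, Finset.sum_apply']
  simp only [AddMonoidAlgebra.coeff_single]
  simp only [Finsupp.single_apply]
  simp

lemma single_mul_Delta (h : ZMod M) :
    AddMonoidAlgebra.single h (1 : ZMod p) * Delta p = Delta p := by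
  unfold Delta
  rw [Finset.mul_sum]
  simp only [AddMonoidAlgebra.single_mul_single, one_mul]
  exact Fintype.sum_equiv (Equiv.addLeft h) _ _ (fun g => rfl)

lemma SA_mul_Delta (A : Finset (ZMod M)) (c : ZMod M) :
    SA p A c * Delta p = A.card • Delta p := by
  unfold SA
  rw [Finset.sum_mul]
  rw [Finset.sum_congr rfl (fun a _ => single_mul_Delta p (c * a))]
  rw [Finset.sum_const]

lemma SA_pow_mul_Delta (A : Finset (ZMod M)) (c : ZMod M) (m : ℕ) :
    (SA p A c) ^ m * Delta p = (A.card ^ m) • Delta p := by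
  induction m with
  | zero => simp
  | succ n ih =>
    rw [pow_succ, mul_assoc, SA_mul_Delta, mul_smul_comm, ih, smul_smul, pow_succ,
      mul_comm (A.card ^ n) A.card]

lemma step (A B : Finset (ZMod M)) (c : ZMod M) (hpM : ¬ p ∣ M)
    (hcard : A.card * B.card = M) (h : ∀ g, cnt A B c g = 1) :
    ∀ g, cnt A B ((p : ZMod M) * c) g = 1 := by
  have hp : p.Prime := Fact.out
  have hAdvd : A.card ∣ M := ⟨B.card, hcard.symm⟩
  have hpA : ¬ p ∣ A.card := fun hd => hpM (hd.trans hAdvd)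
  have h1 : SA p A c * SB p B = Delta p := by
    ext g
    rw [SA_mul_SB_apply, Delta_apply, h g, Nat.cast_one]
  have h2 : (SA p A c) ^ p = SA p A ((p : ZMod M) * c) := by
    unfold SA
    rw [sum_pow_char]
    refine Finset.sum_congr rfl (fun a _ => ?_)
    rw [AddMonoidAlgebra.single_pow, one_pow, nsmul_eq_mul, mul_assoc]
  have h3 : SA p A ((p : ZMod M) * c) * SB p B = Delta p := by
    rw [← h2]
    have hpp : p = (p - 1) + 1 := (Nat.succ_pred_eq_of_pos hp.pos).symm
    calc (SA p A c) ^ p * SB p B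
        = (SA p A c) ^ (p - 1) * (SA p A c * SB p B) := by
          rw [← mul_assoc, ← pow_succ, ← hpp]
      _ = (SA p A c) ^ (p - 1) * Delta p := by rw [h1]
      _ = (A.card ^ (p - 1)) • Delta p := SA_pow_mul_Delta p A c (p - 1)
      _ = Delta p := by
          rw [← Nat.cast_smul_eq_nsmul (ZMod p), Nat.cast_pow,
            ZMod.pow_card_sub_one_eq_one, one_smul]
          rw [Ne, ZMod.natCast_eq_zero_iff]
          exact hpA
  have h4 : ∀ g, (cnt A B ((p : ZMod M) * c) g : ZMod p) = 1 := by
    intro g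
    rw [← SA_mul_SB_apply, h3, Delta_apply]
  refine cnt_all_one A B _ hcard (fun g => ?_)
  rcases Nat.eq_zero_or_pos (cnt A B ((p : ZMod M) * c) g) with h0 | h1'
  · exfalso
    have := h4 g
    rw [h0, Nat.cast_zero] at this
    exact one_ne_zero this.symm
  · exact h1'

end Frobenius

lemma coprime_mul_one (A B : Finset (ZMod M))
    (hcard : A.card * B.card = M) (h : ∀ g, cnt A B 1 g = 1) :
    ∀ k : ℕ, k.Coprime M → ∀ g, cnt A B (k : ZMod M) g = 1 := by
  intro k
  induction k using Nat.strong_induction_on with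
  | _ k ih =>
    intro hk
    rcases eq_or_ne k 1 with rfl | hk1
    · simpa using h
    rcases eq_or_ne k 0 with rfl | hk0
    · have hM1 : M = 1 := by simpa [Nat.coprime_zero_left] using hk
      have h01 : ((0 : ℕ) : ZMod M) = (1 : ZMod M) := by
        subst hM1; exact Subsingleton.elim _ _
      rw [h01]
      exact h
    · set q := k.minFac with hq_def
      have hq : q.Prime := Nat.minFac_prime hk1
      haveI : Fact q.Prime := ⟨hq⟩
      obtain ⟨m, hm⟩ := Nat.minFac_dvd k
      have hqk : q ∣ k := Nat.minFac_dvd k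
      have hqM : ¬ q ∣ M := by
        intro hd
        exact hq.ne_one
          (Nat.Coprime.eq_one_of_dvd (Nat.Coprime.coprime_dvd_left hqk hk) hd)
      have hmk : m ∣ k := ⟨q, by rw [hm, mul_comm]⟩
      have hmcop : m.Coprime M := Nat.Coprime.coprime_dvd_left hmk hk
      have hmlt : m < k := by
        rw [hm]
        have hm0 : 0 < m := by
          rcases Nat.eq_zero_or_pos m with h0 | h1
          · exfalso; exact hk0 (by rw [hm, h0, mul_zero])
          · exact h1
        calc m = 1 * m := (one_mul m).symm
          _ < q * m := mul_lt_mul_of_pos_right hq.one_lt hm0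
      have hTm := ih m hmlt hmcop
      have := step q A B (m : ZMod M) hqM hcard hTm
      intro g
      have hcast : ((k : ℕ) : ZMod M) = (q : ZMod M) * (m : ZMod M) := by
        rw [hm]; push_cast; ring
      rw [hcast]
      exact this g

lemma exists_coprime_mul_eq_gcd (x : ZMod M) :
    ∃ k : ℕ, k.Coprime M ∧ (k : ZMod M) * x = (Nat.gcd x.val M : ZMod M) := by
  have hMpos : 0 < M := NeZero.pos M
  set d := Nat.gcd x.val M with hd
  have hdM : d ∣ M := Nat.gcd_dvd_right _ _
  have hdx : d ∣ x.val := Nat.gcd_dvd_left _ _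
  have hdpos : 0 < d := Nat.gcd_pos_of_pos_right _ hMpos
  obtain ⟨n, hn⟩ := hdM
  obtain ⟨u, hu⟩ := hdx
  have hnpos : 0 < n := by
    rcases Nat.eq_zero_or_pos n with h0 | h1
    · subst h0; rw [mul_zero] at hn; omega
    · exact h1
  haveI : NeZero n := ⟨hnpos.ne'⟩
  have hun : u.Coprime n := by
    have hgcd : Nat.gcd (d * u) (d * n) = d * Nat.gcd u n := Nat.gcd_mul_left d u n
    rw [← hu, ← hn, ← hd] at hgcd
    exact (Nat.eq_of_mul_eq_mul_left hdpos (by rw [mul_one]; exact hgcd)).symm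
  have hdvd : n ∣ M := ⟨d, by rw [hn]; ring⟩
  obtain ⟨w, hw⟩ := ZMod.unitsMap_surjective hdvd (ZMod.unitOfCoprime u hun)⁻¹
  refine ⟨((w : ZMod M)).val, ZMod.val_coe_unit_coprime w, ?_⟩
  set k := ((w : ZMod M)).val with hk
  have h1 : ((k : ℕ) : ZMod n) * (u : ZMod n) = 1 := by
    have h2 : ((k : ℕ) : ZMod n) = ((ZMod.unitOfCoprime u hun)⁻¹ : (ZMod n)ˣ) := by
      rw [hk, ZMod.natCast_val]
      have := congrArg (Units.val) hw
      rw [ZMod.unitsMap_def] at this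
      simpa [ZMod.castHom_apply] using this
    rw [h2, ← ZMod.coe_unitOfCoprime u hun, ← Units.val_mul, inv_mul_cancel, Units.val_one]
  have hmod : (k * u) ≡ 1 [MOD n] := by
    have : ((k * u : ℕ) : ZMod n) = ((1 : ℕ) : ZMod n) := by push_cast; rw [h1]
    exact (ZMod.natCast_eq_natCast_iff _ _ _).mp this
  have hmod2 : d * (k * u) ≡ d * 1 [MOD d * n] := Nat.ModEq.mul_left' d hmod
  rw [← hn, mul_one] at hmod2
  have hcast : ((d * (k * u) : ℕ) : ZMod M) = ((d : ℕ) : ZMod M) :=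
    (ZMod.natCast_eq_natCast_iff _ _ _).mpr hmod2
  have hx : ((x.val : ℕ) : ZMod M) = x := by
    rw [ZMod.natCast_val, ZMod.cast_id]
  calc (k : ZMod M) * x = (k : ZMod M) * ((x.val : ℕ) : ZMod M) := by rw [hx]
    _ = ((k * x.val : ℕ) : ZMod M) := by push_cast; ring
    _ = ((d * (k * u) : ℕ) : ZMod M) := by rw [hu]; ring_nf
    _ = (d : ZMod M) := hcast

lemma exists_coprime_mul (x y : ZMod M)
    (h : Nat.gcd x.val M = Nat.gcd y.val M) :
    ∃ k : ℕ, k.Coprime M ∧ (k : ZMod M) * x = y := by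
  obtain ⟨k1, hk1, e1⟩ := exists_coprime_mul_eq_gcd x
  obtain ⟨k2, hk2, e2⟩ := exists_coprime_mul_eq_gcd y
  set V := ZMod.unitOfCoprime k2 hk2 with hV
  set k3 := ((V⁻¹ : (ZMod M)ˣ) : ZMod M).val with hk3
  have hk3cop : k3.Coprime M := ZMod.val_coe_unit_coprime _
  refine ⟨k3 * k1, Nat.Coprime.mul hk3cop hk1, ?_⟩
  have hk3cast : ((k3 : ℕ) : ZMod M) = ((V⁻¹ : (ZMod M)ˣ) : ZMod M) := by
    rw [hk3, ZMod.natCast_val, ZMod.cast_id]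
  have hk2cast : ((k2 : ℕ) : ZMod M) = (V : ZMod M) := (ZMod.coe_unitOfCoprime k2 hk2).symm
  push_cast
  rw [mul_assoc, e1, h, ← e2, ← mul_assoc, hk3cast, hk2cast]
  rw [show ((V⁻¹ : (ZMod M)ˣ) : ZMod M) * (V : ZMod M) = 1 by
    rw [← Units.val_mul, inv_mul_cancel, Units.val_one]]
  rw [one_mul]

end SandsAux

open SandsAux in
/-- Sands' theorem: `A ⊕ B = ℤ_M` iff `|A|·|B| = M` and `Div(A) ∩ Div(B) = {M}`. -/
theorem stmt_0 (M : ℕ) (hM : 0 < M) (A B : Finset (ZMod M)) :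
    Tiles A B ↔ (A.card * B.card = M ∧ DivSet A ∩ DivSet B = {M}) := by
  haveI : NeZero M := ⟨hM.ne'⟩
  constructor
  · intro ht
    have hcnt : ∀ g, cnt A B 1 g = 1 := (tiles_iff A B).mp ht
    have hcard : A.card * B.card = M := by
      have h1 := sum_cnt A B 1
      rw [Finset.sum_congr rfl (fun g _ => hcnt g), Finset.sum_const, smul_eq_mul,
        mul_one, card_univ_zmod] at h1
      exact h1.symm
    refine ⟨hcard, ?_⟩
    obtain ⟨ab, hab, -⟩ := ht 0
    ext d
    simp only [Set.mem_inter_iff, Set.mem_singleton_iff, DivSet, Set.mem_setOf_eq]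
    constructor
    · rintro ⟨⟨a, ha, a', ha', hda⟩, ⟨b, hb, b', hb', hdb⟩⟩
      by_contra hne
      have hx0 : a - a' ≠ 0 := by
        intro h0
        rw [h0, ZMod.val_zero, Nat.gcd_zero_left] at hda
        exact hne hda.symm
      obtain ⟨k, hk, hkxy⟩ := exists_coprime_mul (a - a') (b - b') (hda.trans hdb.symm)
      have hT := coprime_mul_one A B hcard hcnt k hk
      set c := (k : ZMod M) with hc
      have hg : c * a' + b = c * a + b' := by
        have hthis : c * (a - a') = b - b' := hkxy
        linear_combination -hthis
      have h2 : 1 < cnt A B c (c * a + b') := by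
        rw [cnt, Finset.one_lt_card]
        refine ⟨(a, b'), ?_, (a', b), ?_, ?_⟩
        · rw [Finset.mem_filter, Finset.mem_product]; exact ⟨⟨ha, hb'⟩, rfl⟩
        · rw [Finset.mem_filter, Finset.mem_product]; exact ⟨⟨ha', hb⟩, hg⟩
        · intro hEq
          apply hx0
          have := congrArg Prod.fst hEq
          simp only at this
          rw [this, sub_self]
      rw [hT _] at h2
      exact lt_irrefl 1 h2
    · rintro rfl
      exact ⟨⟨ab.1, hab.1, ab.1, hab.1, by simp⟩,
             ⟨ab.2, hab.2.1, ab.2, hab.2.1, by simp⟩⟩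
  · rintro ⟨hcard, hdiv⟩
    rw [tiles_iff]
    apply cnt_all_one' A B 1 hcard
    intro g
    by_contra hgt
    push_neg at hgt
    rw [cnt, Finset.one_lt_card] at hgt
    obtain ⟨ab, hab, cd, hcd, hne⟩ := hgt
    rw [Finset.mem_filter, Finset.mem_product] at hab hcd
    obtain ⟨⟨ha, hb⟩, hs⟩ := hab
    obtain ⟨⟨hc, hd⟩, hs'⟩ := hcd
    simp only [one_mul] at hs hs'
    have hsum : ab.1 + ab.2 = cd.1 + cd.2 := by rw [hs, hs']
    have hx : ab.1 - cd.1 = cd.2 - ab.2 := by linear_combination hsum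
    have hane : ab.1 ≠ cd.1 := by
      intro h1
      apply hne
      have h2 : ab.2 = cd.2 := by
        have := hsum
        rw [h1] at this
        exact add_left_cancel this
      exact Prod.ext h1 h2
    have hmem : Nat.gcd ((ab.1 - cd.1)).val M ∈ DivSet A ∩ DivSet B :=
      ⟨⟨ab.1, ha, cd.1, hc, rfl⟩, ⟨cd.2, hd, ab.2, hb, by rw [← hx]⟩⟩
    rw [hdiv] at hmem
    have heM : Nat.gcd ((ab.1 - cd.1)).val M = M := hmem
    have hMdvd : M ∣ (ab.1 - cd.1).val := by
      have hgl := Nat.gcd_dvd_left ((ab.1 - cd.1)).val M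
      rwa [heM] at hgl
    have hvlt : (ab.1 - cd.1).val < M := ZMod.val_lt _
    have hv0 : (ab.1 - cd.1).val = 0 := Nat.eq_zero_of_dvd_of_lt hMdvd hvlt
    exact hane (sub_eq_zero.mp ((ZMod.val_eq_zero _).mp hv0))
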